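/- The relation ≈ on Λ_G, defined by g ≈ g' if and only if g is Λ_G-connected to g', is an equivalence relation. -/
import Mathlib


open Submodule

section
variable {G : Type*} [CommGroup G]

/-- A chain connection: a nonempty list `c` starting at `g`, with all entries in
`Main ∪ Other`, all proper partial products in `Main`, and total product `g'` or `g'⁻¹`. -/
def ChainConnected (Main Other : Set G) (g g' : G) : Prop :=
  ∃ c : List G, c ≠ [] ∧ c.head? = some g ∧
    (∀ k ∈ c, k ∈ Main ∪ Other) ∧
    (∀ i : ℕ, 0 < i → i < c.length → (c.take i).prod ∈ Main) ∧
    (c.prod = g' ∨ c.prod = g'⁻¹)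

end

/-- A `G`-graded Lie-Rinehart algebra `(L, A)` over a field `F`. -/
structure GradedLieRinehart (F : Type*) [Field F] (G : Type*) [CommGroup G] [DecidableEq G]
    (A : Type*) [CommRing A] [Algebra F A]
    (L : Type*) [LieRing L] [LieAlgebra F L] [Module A L] [IsScalarTower F A L] where
  ρ : L →ₗ[F] Derivation F A A
  ρ_smul : ∀ (a : A) (v : L) (b : A), ρ (a • v) b = a * ρ v b
  ρ_bracket : ∀ v w : L, ρ ⁅v, w⁆ = ⁅ρ v, ρ w⁆
  leibniz : ∀ (v w : L) (a : A), ⁅v, a • w⁆ = a • ⁅v, w⁆ + (ρ v a) • w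
  𝓛 : G → Submodule F L
  𝓐 : G → Submodule F A
  internalL : DirectSum.IsInternal 𝓛
  internalA : DirectSum.IsInternal 𝓐
  bracket_mem : ∀ {g h : G} {v w : L}, v ∈ 𝓛 g → w ∈ 𝓛 h → ⁅v, w⁆ ∈ 𝓛 (g * h)
  mul_mem : ∀ {g h : G} {a b : A}, a ∈ 𝓐 g → b ∈ 𝓐 h → a * b ∈ 𝓐 (g * h)
  smul_mem : ∀ {h g : G} {a : A} {v : L}, a ∈ 𝓐 h → v ∈ 𝓛 g → a • v ∈ 𝓛 (h * g)
  rho_mem : ∀ {g h : G} {v : L} {a : A}, v ∈ 𝓛 g → a ∈ 𝓐 h → ρ v a ∈ 𝓐 (g * h)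

namespace GradedLieRinehart

variable {F : Type*} [Field F] {G : Type*} [CommGroup G] [DecidableEq G]
  {A : Type*} [CommRing A] [Algebra F A]
  {L : Type*} [LieRing L] [LieAlgebra F L] [Module A L] [IsScalarTower F A L]
variable (𝔏 : GradedLieRinehart F G A L)

/-- The support `Σ_G` of the grading of `L`. -/
def SuppL : Set G := {g | g ≠ 1 ∧ 𝔏.𝓛 g ≠ ⊥}

/-- The support `Λ_G` of the grading of `A`. -/
def SuppA : Set G := {g | g ≠ 1 ∧ 𝔏.𝓐 g ≠ ⊥}

/-- `Σ_G^± = Σ_G ∪ Σ_G⁻¹`. -/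
def Spm : Set G := {g | g ∈ 𝔏.SuppL ∨ g⁻¹ ∈ 𝔏.SuppL}

/-- `Λ_G^± = Λ_G ∪ Λ_G⁻¹`. -/
def Lpm : Set G := {g | g ∈ 𝔏.SuppA ∨ g⁻¹ ∈ 𝔏.SuppA}

/-- `g` is `Σ_G`-connected to `g'`. -/
def SigmaConnected (g g' : G) : Prop := ChainConnected 𝔏.Spm 𝔏.Lpm g g'

/-- `g` is `Λ_G`-connected to `g'`. -/
def LambdaConnected (g g' : G) : Prop := ChainConnected (𝔏.Lpm ∪ 𝔏.Spm) (∅ : Set G) g g'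

/-- The span of products `A_h • L_g`. -/
def smulSub (h g : G) : Submodule F L :=
  Submodule.span F {x | ∃ a ∈ 𝔏.𝓐 h, ∃ v ∈ 𝔏.𝓛 g, x = a • v}

/-- The span of brackets `[L_h, L_g]`. -/
def bracketSub (h g : G) : Submodule F L :=
  Submodule.span F {x | ∃ v ∈ 𝔏.𝓛 h, ∃ w ∈ 𝔏.𝓛 g, x = ⁅v, w⁆}

/-- `L_{[g],1}`. -/
def L1class (g : G) : Submodule F L :=
  (⨆ g' ∈ {g' | g' ∈ 𝔏.SuppL ∧ 𝔏.SigmaConnected g g' ∧ g' ∈ 𝔏.SuppA}, 𝔏.smulSub g'⁻¹ g') ⊔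
  (⨆ g' ∈ {g' | g' ∈ 𝔏.SuppL ∧ 𝔏.SigmaConnected g g'}, 𝔏.bracketSub g'⁻¹ g')

/-- `V_{[g]}`. -/
def Vclass (g : G) : Submodule F L :=
  ⨆ g' ∈ {g' | g' ∈ 𝔏.SuppL ∧ 𝔏.SigmaConnected g g'}, 𝔏.𝓛 g'

/-- The ideal `I_{[g]} = L_{[g],1} ⊕ V_{[g]}` attached to the class of `g`. -/
def Iclass (g : G) : Submodule F L := 𝔏.L1class g ⊔ 𝔏.Vclass g

/-- `Σ_{g ∈ Σ_G ∩ Λ_G} A_{g⁻¹} L_g + Σ_{g ∈ Σ_G} [L_{g⁻¹}, L_g]`. -/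
def L1full : Submodule F L :=
  (⨆ g ∈ 𝔏.SuppL ∩ 𝔏.SuppA, 𝔏.smulSub g⁻¹ g) ⊔ (⨆ g ∈ 𝔏.SuppL, 𝔏.bracketSub g⁻¹ g)

/-- An ideal of the Lie-Rinehart algebra `(L,A)`: a Lie ideal which is an `A`-submodule
and satisfies `ρ(I)(A)L ⊆ I`. -/
def IsIdealL (I : Submodule F L) : Prop :=
  (∀ (x : L), ∀ y ∈ I, ⁅x, y⁆ ∈ I) ∧ (∀ (a : A), ∀ y ∈ I, a • y ∈ I) ∧
  (∀ v ∈ I, ∀ (a : A) (w : L), (𝔏.ρ v a) • w ∈ I)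

/-- A graded submodule of `L`. -/
def IsGradedL (I : Submodule F L) : Prop := I = ⨆ k : G, I ⊓ 𝔏.𝓛 k

/-- A graded ideal of `(L,A)`. -/
def IsGradedIdealL (I : Submodule F L) : Prop := 𝔏.IsIdealL I ∧ 𝔏.IsGradedL I

/-- `(L,A)` is gr-simple. -/
def GrSimpleL : Prop :=
  (∃ v w : L, ⁅v, w⁆ ≠ 0) ∧ (∃ a b : A, a * b ≠ 0) ∧ (∃ (a : A) (v : L), a • v ≠ 0) ∧
  ∀ I : Submodule F L, 𝔏.IsGradedIdealL I → I = ⊥ ∨ I = ⊤ ∨ I = LinearMap.ker 𝔏.ρ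

/-- The span of products `A_h · A_g`. -/
def mulSub (h g : G) : Submodule F A :=
  Submodule.span F {x | ∃ a ∈ 𝔏.𝓐 h, ∃ b ∈ 𝔏.𝓐 g, x = a * b}

/-- The span of `ρ(L_h)(A_g)`. -/
def rhoSub (h g : G) : Submodule F A :=
  Submodule.span F {x | ∃ v ∈ 𝔏.𝓛 h, ∃ a ∈ 𝔏.𝓐 g, x = 𝔏.ρ v a}

/-- `A_{[g],1}`. -/
def A1class (g : G) : Submodule F A :=
  (⨆ g' ∈ {g' | g' ∈ 𝔏.SuppA ∧ 𝔏.LambdaConnected g g' ∧ g' ∈ 𝔏.SuppL}, 𝔏.rhoSub g'⁻¹ g') ⊔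
  (⨆ g' ∈ {g' | g' ∈ 𝔏.SuppA ∧ 𝔏.LambdaConnected g g'}, 𝔏.mulSub g'⁻¹ g')

/-- `A_{[g]}`. -/
def Aclass (g : G) : Submodule F A :=
  ⨆ g' ∈ {g' | g' ∈ 𝔏.SuppA ∧ 𝔏.LambdaConnected g g'}, 𝔏.𝓐 g'

/-- `𝒜_{[g]} = A_{[g],1} ⊕ A_{[g]}`. -/
def calA (g : G) : Submodule F A := 𝔏.A1class g ⊔ 𝔏.Aclass g

/-- `Σ_{g ∈ Λ_G ∩ Σ_G} ρ(L_{g⁻¹})(A_g) + Σ_{g ∈ Λ_G} A_{g⁻¹} A_g`. -/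
def A1full : Submodule F A :=
  (⨆ g ∈ 𝔏.SuppA ∩ 𝔏.SuppL, 𝔏.rhoSub g⁻¹ g) ⊔ (⨆ g ∈ 𝔏.SuppA, 𝔏.mulSub g⁻¹ g)

/-- An ideal of the commutative associative algebra `A`. -/
def IsIdealA (I : Submodule F A) : Prop := ∀ (a : A), ∀ x ∈ I, a * x ∈ I

/-- A graded submodule of `A`. -/
def IsGradedA (I : Submodule F A) : Prop := I = ⨆ k : G, I ⊓ 𝔏.𝓐 k

/-- A graded ideal of `A`. -/
def IsGradedIdealA (I : Submodule F A) : Prop := IsIdealA I ∧ 𝔏.IsGradedA I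

/-- `A` is gr-simple. -/
def GrSimpleA : Prop :=
  (∃ a b : A, a * b ≠ 0) ∧
  ∀ I : Submodule F A, 𝔏.IsGradedIdealA I → I = ⊥ ∨ I = ⊤

/-- The graded Lie-Rinehart algebra `(L,A)` is tight. -/
def Tight : Prop :=
  (∀ v : L, (∀ w : L, ⁅v, w⁆ = 0) → 𝔏.ρ v = 0 → v = 0) ∧
  (∀ v : L, (∀ a : A, a • v = 0) → v = 0) ∧
  (∀ a : A, (∀ b : A, a * b = 0) → a = 0) ∧
  Submodule.span F {x : A | ∃ b c : A, x = b * c} = ⊤ ∧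
  Submodule.span F {x : L | ∃ (a : A) (w : L), x = a • w} = ⊤ ∧
  𝔏.𝓛 1 = 𝔏.L1full ∧ 𝔏.𝓐 1 = 𝔏.A1full

/-- `(L,A)` is of maximal length. -/
def MaximalLength : Prop :=
  (∀ g ∈ 𝔏.SuppL, Module.rank F (𝔏.𝓛 g) = 1) ∧ (∀ k ∈ 𝔏.SuppA, Module.rank F (𝔏.𝓐 k) = 1)

/-- `(L,A)` is `G`-multiplicative. -/
def GMultiplicative : Prop :=
  (∀ g ∈ 𝔏.SuppL, ∀ h ∈ 𝔏.SuppL, g * h ∈ 𝔏.SuppL → ∃ v ∈ 𝔏.𝓛 g, ∃ w ∈ 𝔏.𝓛 h, ⁅v, w⁆ ≠ 0) ∧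
  (∀ k ∈ 𝔏.SuppA, ∀ g ∈ 𝔏.SuppL, k * g ∈ 𝔏.SuppL → ∃ a ∈ 𝔏.𝓐 k, ∃ v ∈ 𝔏.𝓛 g, a • v ≠ 0) ∧
  (∀ k ∈ 𝔏.SuppA, ∀ j ∈ 𝔏.SuppA, k * j ∈ 𝔏.SuppA → ∃ a ∈ 𝔏.𝓐 k, ∃ b ∈ 𝔏.𝓐 j, a * b ≠ 0)

/-- A gr-simple ideal of `(L,A)`: a graded ideal with nonzero bracket whose only graded
ideals of `L` contained in it are `0`, itself and its intersection with `Ker ρ`. -/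
def GrSimpleIdealL (I : Submodule F L) : Prop :=
  𝔏.IsGradedIdealL I ∧ (∃ x ∈ I, ∃ y ∈ I, ⁅x, y⁆ ≠ 0) ∧
  ∀ J : Submodule F L, 𝔏.IsGradedIdealL J → J ≤ I →
    (J = ⊥ ∨ J = I ∨ J = LinearMap.ker 𝔏.ρ ⊓ I)

end GradedLieRinehart

open GradedLieRinehart

variable {F : Type*} [Field F] {G : Type*} [CommGroup G] [DecidableEq G]
  {A : Type*} [CommRing A] [Algebra F A]
  {L : Type*} [LieRing L] [LieAlgebra F L] [Module A L] [IsScalarTower F A L]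

section ReachAux

variable {G' : Type*} [CommGroup G']

/-- Inductive reachability: there is a chain starting at `g`, with all entries in `M`,
all proper partial products in `M`, and total product the target. -/
inductive Reach (M : Set G') (g : G') : G' → Prop
  | base : g ∈ M → Reach M g g
  | step : ∀ {x : G'} (k : G'), Reach M g x → x ∈ M → k ∈ M → Reach M g (x * k)

lemma Reach.comp {M : Set G'} {h x y : G'} (hxy : Reach M x y) (hhx : Reach M h x) :
    Reach M h y := by
  induction hxy with
  | base _ => exact hhx
  | step k _ hx hk ih => exact Reach.step k ih hx hk

lemma reach_of_chain {M : Set G'} :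
    ∀ (c : List G') (g : G'), c ≠ [] → c.head? = some g →
    (∀ k ∈ c, k ∈ M) →
    (∀ i : ℕ, 0 < i → i < c.length → (c.take i).prod ∈ M) →
    Reach M g c.prod := by
  intro c
  induction c using List.reverseRecOn with
  | nil => intro g h; exact absurd rfl h
  | append_singleton c k ih =>
    intro g _ hhead hmem hpart
    rcases eq_or_ne c [] with rfl | hc
    · simp only [List.nil_append, List.head?_cons, Option.some.injEq] at hhead
      subst hhead
      simpa using Reach.base (hmem k (by simp))
    · obtain ⟨a, t, rfl⟩ := List.exists_cons_of_ne_nil hc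
      have hhead' : (a :: t).head? = some g := by
        simpa using hhead
      have hlen : 0 < (a :: t).length := by simp
      have hr : Reach M g (a :: t).prod := by
        refine ih g hc hhead' (fun x hx => hmem x (by
          simp only [List.cons_append, List.mem_cons, List.mem_append] at hx ⊢; tauto)) ?_
        intro i hi hi'
        have := hpart i hi (by
          simp only [List.length_append, List.length_cons, List.length_singleton] at hi' ⊢
          omega)
        rwa [List.take_append_of_le_length (by omega)] at this
      have hcprod : (a :: t).prod ∈ M := by
        have := hpart (a :: t).length hlen (by simp)
        rwa [List.take_append_of_le_length le_rfl, List.take_length] at this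
      have hk : k ∈ M := hmem k (by simp)
      simpa [mul_assoc] using Reach.step k hr hcprod hk

lemma chain_of_reach {M : Set G'} {g x : G'} (h : Reach M g x) :
    ∃ c : List G', c ≠ [] ∧ c.head? = some g ∧ (∀ k ∈ c, k ∈ M) ∧
      (∀ i : ℕ, 0 < i → i < c.length → (c.take i).prod ∈ M) ∧ c.prod = x := by
  induction h with
  | base hg =>
    refine ⟨[g], by simp, by simp, by simpa using hg, ?_, by simp⟩
    intro i h1 h2
    simp only [List.length_singleton] at h2
    omega
  | step k hr hx hk ih =>
    obtain ⟨c, hne, hhead, hmem, hpart, hprod⟩ := ih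
    obtain ⟨a, t, rfl⟩ := List.exists_cons_of_ne_nil hne
    refine ⟨(a :: t) ++ [k], by simp, by simpa using hhead, ?_, ?_, ?_⟩
    · intro x hx'
      rcases List.mem_append.mp hx' with h' | h'
      · exact hmem x h'
      · simp only [List.mem_singleton] at h'
        subst h'; exact hk
    · intro i hi hi'
      simp only [List.length_append, List.length_singleton] at hi'
      rcases lt_or_ge i (a :: t).length with h' | h'
      · have := hpart i hi h'
        rwa [List.take_append_of_le_length (le_of_lt h')]
      · have hieq : i = (a :: t).length := by omega
        subst hieq
        rw [List.take_append_of_le_length le_rfl, List.take_length, hprod]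
        exact hx
    · rw [List.prod_append, hprod]; simp

lemma reach_inv {M : Set G'} (hM : ∀ y ∈ M, y⁻¹ ∈ M) {g x : G'} (h : Reach M g x)
    (hg : g⁻¹ ∈ M) : Reach M g⁻¹ x⁻¹ := by
  induction h with
  | base _ => exact Reach.base hg
  | @step x k hr hx hk ih =>
    have := Reach.step k⁻¹ ih (hM x hx) (hM k hk)
    simpa [mul_inv_rev, mul_comm] using this

lemma reach_symm₁ {M : Set G'} (hM : ∀ y ∈ M, y⁻¹ ∈ M) {g x : G'} (h : Reach M g x)
    (hx : x ∈ M) : Reach M x g := by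
  induction h with
  | base hg => exact Reach.base hg
  | @step x' k hr hx' hk ih =>
    have h1 : Reach M (x' * k) x' := by
      have := Reach.step k⁻¹ (Reach.base hx) hx (hM k hk)
      simpa using this
    exact (ih hx').comp h1

lemma reach_symm₂ {M : Set G'} (hM : ∀ y ∈ M, y⁻¹ ∈ M) {g x : G'} (h : Reach M g x)
    (hx : x⁻¹ ∈ M) : Reach M x⁻¹ g⁻¹ := by
  induction h with
  | base hg => exact Reach.base hx
  | @step x' k hr hx' hk ih =>
    have h1 : Reach M (x' * k)⁻¹ x'⁻¹ := by
      have := Reach.step k (Reach.base hx) hx hk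
      have heq : (x' * k)⁻¹ * k = x'⁻¹ := by
        rw [mul_inv_rev, mul_comm k⁻¹ x'⁻¹, mul_assoc, inv_mul_cancel, mul_one]
      rwa [heq] at this
    exact (ih (hM _ hx')).comp h1

end ReachAux

lemma lambdaConnected_iff_reach (𝔏 : GradedLieRinehart F G A L) (g g' : G) :
    𝔏.LambdaConnected g g' ↔
      (Reach (𝔏.Lpm ∪ 𝔏.Spm) g g' ∨ Reach (𝔏.Lpm ∪ 𝔏.Spm) g g'⁻¹) := by
  constructor
  · rintro ⟨c, hne, hhead, hmem, hpart, hprod⟩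
    have hmem' : ∀ k ∈ c, k ∈ 𝔏.Lpm ∪ 𝔏.Spm := by
      intro k hk
      have := hmem k hk
      simpa using this
    have := reach_of_chain c g hne hhead hmem' hpart
    rcases hprod with h | h
    · exact Or.inl (h ▸ this)
    · exact Or.inr (h ▸ this)
  · intro h
    rcases h with h | h
    · obtain ⟨c, hne, hhead, hmem, hpart, hprod⟩ := chain_of_reach h
      exact ⟨c, hne, hhead, fun k hk => by simpa using hmem k hk, hpart, Or.inl hprod⟩
    · obtain ⟨c, hne, hhead, hmem, hpart, hprod⟩ := chain_of_reach h
      exact ⟨c, hne, hhead, fun k hk => by simpa using hmem k hk, hpart, Or.inr hprod⟩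

lemma lpm_spm_inv_closed (𝔏 : GradedLieRinehart F G A L) :
    ∀ y ∈ 𝔏.Lpm ∪ 𝔏.Spm, y⁻¹ ∈ 𝔏.Lpm ∪ 𝔏.Spm := by
  intro y hy
  rcases hy with hy | hy
  · left
    rcases hy with h | h
    · exact Or.inr (by simpa using h)
    · exact Or.inl h
  · right
    rcases hy with h | h
    · exact Or.inr (by simpa using h)
    · exact Or.inl h

lemma suppA_mem_union (𝔏 : GradedLieRinehart F G A L) {g : G} (hg : g ∈ 𝔏.SuppA) :
    g ∈ 𝔏.Lpm ∪ 𝔏.Spm := Or.inl (Or.inl hg)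

/-- The Λ_G-connection relation on Λ_G is an equivalence relation. -/
theorem lambdaConnected_equivalence (𝔏 : GradedLieRinehart F G A L) :
    Equivalence (fun g g' : {x : G // x ∈ 𝔏.SuppA} => 𝔏.LambdaConnected g.1 g'.1) := by
  have hMinv := lpm_spm_inv_closed 𝔏
  constructor
  · rintro ⟨g, hg⟩
    rw [lambdaConnected_iff_reach]
    exact Or.inl (Reach.base (suppA_mem_union 𝔏 hg))
  · rintro ⟨g, hg⟩ ⟨g', hg'⟩ h
    rw [lambdaConnected_iff_reach] at h ⊢
    have hg'M : g' ∈ 𝔏.Lpm ∪ 𝔏.Spm := suppA_mem_union 𝔏 hg'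
    rcases h with h | h
    · exact Or.inl (reach_symm₁ hMinv h hg'M)
    · have := reach_symm₂ hMinv h (by simpa using hg'M)
      simp only [inv_inv] at this
      exact Or.inr this
  · rintro ⟨g, hg⟩ ⟨g', hg'⟩ ⟨g'', hg''⟩ h1 h2
    rw [lambdaConnected_iff_reach] at h1 h2 ⊢
    have hg'M : g' ∈ 𝔏.Lpm ∪ 𝔏.Spm := suppA_mem_union 𝔏 hg'
    rcases h1 with h1 | h1
    · rcases h2 with h2 | h2
      · exact Or.inl (h2.comp h1)
      · exact Or.inr (h2.comp h1)
    · rcases h2 with h2 | h2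
      · have := reach_inv hMinv h2 (hMinv g' hg'M)
        exact Or.inr (this.comp h1)
      · have := reach_inv hMinv h2 (hMinv g' hg'M)
        simp only [inv_inv] at this
        exact Or.inl (this.comp h1)
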